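/- Let ψ ∈ 𝒦 with radius R_ψ and extinction probability function q(t) = g(t/ψ(t))/t for t ∈ (0,R_ψ), extended by q(0) = 1. Then q is continuous on [0,R_ψ). In particular lim_{t↓0} q(t) = 1. -/

import Mathlib

set_option maxHeartbeats 1000000

open Set Filter Topology

/-- The function defined by the power series with coefficients `b`. -/
noncomputable def psi (b : ℕ → ℝ) (t : ℝ) : ℝ := ∑' n, b n * t ^ n

/-- The mean function of the Khinchin family of `psi b`. -/
noncomputable def mean (b : ℕ → ℝ) (t : ℝ) : ℝ := t * deriv (psi b) t / psi b t

/-- Coefficients of the solution of Lagrange's equation `g(z) = z ψ(g(z))`,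
given by Lagrange's inversion formula. -/
noncomputable def lagA (b : ℕ → ℝ) : ℕ → ℝ := fun n =>
  if n = 0 then 0 else (n : ℝ)⁻¹ * PowerSeries.coeff (n - 1) ((PowerSeries.mk b) ^ n)

/-- The solution `g` of Lagrange's equation with data `ψ`, as a function. -/
noncomputable def lagG (b : ℕ → ℝ) (z : ℝ) : ℝ := ∑' n, lagA b n * z ^ n

open PowerSeries

namespace Stmt15

/-- coefficient of a power depends only on lower coefficients -/
lemma coeff_pow_congr {S T : ℝ⟦X⟧} (m : ℕ) :
    ∀ j : ℕ, (∀ i ≤ j, coeff i S = coeff i T) →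
      coeff j (S ^ m) = coeff j (T ^ m) := by
  induction m with
  | zero => intro j _; simp
  | succ m ih =>
    intro j h
    rw [pow_succ, pow_succ, coeff_mul, coeff_mul]
    refine Finset.sum_congr rfl fun p hp => ?_
    rw [Finset.HasAntidiagonal.mem_antidiagonal] at hp
    have h1 : p.1 ≤ j := le_of_add_le_left hp.le
    have h2 : p.2 ≤ j := le_of_add_le_right hp.le
    rw [ih p.1 (fun i hi => h i (hi.trans h1)), h p.2 h2]

/-- the coefficients of the solution `U` of `U = F(X·U)`, by strong recursion -/
noncomputable def u (b : ℕ → ℝ) : ℕ → ℝ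
  | n => ∑ m ∈ Finset.range (n + 1),
      b m * coeff (n - m)
        ((PowerSeries.mk (fun i => if _ : i < n then u b i else 0)) ^ m)
  termination_by n => n

noncomputable def Useries (b : ℕ → ℝ) : ℝ⟦X⟧ := PowerSeries.mk (u b)

noncomputable def Gseries (b : ℕ → ℝ) : ℝ⟦X⟧ := X * Useries b

lemma u_eq (b : ℕ → ℝ) (n : ℕ) :
    u b n = ∑ m ∈ Finset.range (n + 1), b m * coeff (n - m) (Useries b ^ m) := by
  rw [u]
  refine Finset.sum_congr rfl fun m hm => ?_
  have hmn : m ≤ n := Nat.lt_succ_iff.mp (Finset.mem_range.mp hm)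
  rcases Nat.eq_zero_or_pos m with rfl | hm1
  · simp
  congr 1
  refine coeff_pow_congr m (n - m) fun i hi => ?_
  have : i < n := lt_of_le_of_lt hi (by omega)
  simp [Useries, this]

lemma u_zero (b : ℕ → ℝ) : u b 0 = b 0 := by
  rw [u_eq]; simp

lemma constantCoeff_U (b : ℕ → ℝ) : constantCoeff (Useries b) = b 0 := by
  rw [← coeff_zero_eq_constantCoeff_apply]
  simp [Useries, u_zero]

lemma coeff_G_succ (b : ℕ → ℝ) (n : ℕ) : coeff (n + 1) (Gseries b) = u b n := by
  rw [Gseries, coeff_succ_X_mul]; simp [Useries]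

lemma coeff_G_zero (b : ℕ → ℝ) : coeff 0 (Gseries b) = 0 := by
  simp [Gseries]

lemma coeff_G_pow (b : ℕ → ℝ) (m j : ℕ) :
    coeff j (Gseries b ^ m) =
      if m ≤ j then coeff (j - m) (Useries b ^ m) else 0 := by
  rw [Gseries, mul_pow, coeff_X_pow_mul']

/-- aeval of a polynomial with vanishing low coefficients, at G, is divisible by X^N -/
lemma X_pow_dvd_aeval (b : ℕ → ℝ) (N : ℕ) (p : Polynomial ℝ)
    (hp : ∀ k < N, p.coeff k = 0) :
    (X : ℝ⟦X⟧) ^ N ∣ Polynomial.aeval (Gseries b) p := by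
  rw [PowerSeries.X_pow_dvd_iff]
  intro m hm
  rw [Polynomial.aeval_eq_sum_range, map_sum]
  refine Finset.sum_eq_zero fun k hk => ?_
  rcases lt_or_ge k N with hkN | hkN
  · simp [hp k hkN]
  · rw [map_smul, coeff_G_pow, if_neg (by omega), smul_zero]

lemma aeval_trunc (b : ℕ → ℝ) (N : ℕ) (f : ℝ⟦X⟧) (j : ℕ) :
    coeff j (Polynomial.aeval (Gseries b) (trunc N f)) =
      ∑ m ∈ Finset.range N, coeff m f * coeff j (Gseries b ^ m) := by
  rw [trunc_apply, Polynomial.aeval_def, Polynomial.eval₂_finset_sum, map_sum]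
  rw [Finset.range_eq_Ico]
  refine Finset.sum_congr rfl fun m _ => ?_
  rw [Polynomial.eval₂_monomial, show (algebraMap ℝ ℝ⟦X⟧) = C from rfl, coeff_C_mul]

lemma HU (b : ℕ → ℝ) (N : ℕ) :
    (X : ℝ⟦X⟧) ^ N ∣ Useries b - Polynomial.aeval (Gseries b) (trunc N (PowerSeries.mk b)) := by
  rw [PowerSeries.X_pow_dvd_iff]
  intro j hj
  rw [map_sub, aeval_trunc, sub_eq_zero]
  have : (coeff j) (Useries b) = u b j := by simp [Useries]
  rw [this, u_eq]
  simp only [coeff_mk, coeff_G_pow]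
  rw [eq_comm]
  simp only [mul_ite, mul_zero]
  rw [← Finset.sum_subset (Finset.range_subset_range.mpr (by omega) :
    Finset.range (j+1) ⊆ Finset.range N)]
  · refine Finset.sum_congr rfl fun m hm => ?_
    rw [if_pos (by simpa [Nat.lt_succ_iff] using Finset.mem_range.mp hm)]
  · intro m _ hm
    rw [if_neg (by simpa [Nat.lt_succ_iff] using hm)]

lemma U_pow_congr (b : ℕ → ℝ) (n N : ℕ) :
    (X : ℝ⟦X⟧) ^ N ∣ Useries b ^ n
      - Polynomial.aeval (Gseries b) (trunc N ((PowerSeries.mk b) ^ n)) := by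
  set P : Polynomial ℝ := trunc N (PowerSeries.mk b) with hP
  have h1 : (X : ℝ⟦X⟧) ^ N ∣ Useries b ^ n - (Polynomial.aeval (Gseries b) P) ^ n :=
    dvd_trans (HU b N) (sub_dvd_pow_sub_pow _ _ n)
  have h2 : (Polynomial.aeval (Gseries b) P) ^ n = Polynomial.aeval (Gseries b) (P ^ n) := by
    rw [map_pow]
  have h3 : (X : ℝ⟦X⟧) ^ N ∣
      Polynomial.aeval (Gseries b) (P ^ n - trunc N ((PowerSeries.mk b) ^ n)) := by
    apply X_pow_dvd_aeval
    intro k hk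
    rw [Polynomial.coeff_sub, coeff_trunc, if_pos hk, sub_eq_zero]
    have : (P : ℝ⟦X⟧) ^ n = ((P ^ n : Polynomial ℝ) : ℝ⟦X⟧) := by
      rw [Polynomial.coe_pow]
    calc (P ^ n).coeff k = coeff k ((P : ℝ⟦X⟧) ^ n) := by
          rw [this, Polynomial.coeff_coe]
      _ = coeff k ((PowerSeries.mk b) ^ n) := by
          apply coeff_pow_congr
          intro i hi
          rw [hP, Polynomial.coeff_coe, coeff_trunc, if_pos (by omega)]
  have heq : Useries b ^ n - Polynomial.aeval (Gseries b) (trunc N ((PowerSeries.mk b) ^ n))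
      = (Useries b ^ n - (Polynomial.aeval (Gseries b) P) ^ n)
        + Polynomial.aeval (Gseries b) (P ^ n - trunc N ((PowerSeries.mk b) ^ n)) := by
    rw [map_sub, h2]; ring
  rw [heq]
  exact dvd_add h1 h3

section Residue

variable (b : ℕ → ℝ)

lemma dG_eq : d⁄dX ℝ (Gseries b) = Useries b + X * d⁄dX ℝ (Useries b) := by
  rw [Gseries, Derivation.leibniz, derivative_X]
  rw [smul_eq_mul, smul_eq_mul, mul_one]
  ring

lemma residue_zero (hb0 : b 0 ≠ 0) (m : ℕ) :
    coeff (m + 1) ((Useries b)⁻¹ ^ (m + 2) * d⁄dX ℝ (Gseries b)) = 0 := by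
  set U := Useries b with hU
  set V := U⁻¹ with hV
  have hVU : V * U = 1 := PowerSeries.inv_mul_cancel U (by rw [constantCoeff_U]; exact hb0)
  rw [dG_eq, mul_add, map_add]
  have e1 : V ^ (m + 2) * U = V ^ (m + 1) := by
    rw [pow_succ, mul_assoc, hVU, mul_one]
  have e2 : V ^ (m + 2) * (X * d⁄dX ℝ U) = X * (V ^ (m + 2) * d⁄dX ℝ U) := by ring
  rw [e1, e2, coeff_succ_X_mul]
  have hdW : d⁄dX ℝ (V ^ (m + 1))
      = -((((m + 1 : ℕ) : ℝ⟦X⟧)) * (V ^ (m + 2) * d⁄dX ℝ U)) := by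
    rw [Derivation.leibniz_pow, hV, derivative_inv']
    simp only [Nat.add_sub_cancel, smul_eq_mul, nsmul_eq_mul]
    push_cast
    ring
  have hc : coeff m (d⁄dX ℝ (V ^ (m + 1))) = coeff (m + 1) (V ^ (m + 1)) * (m + 1) := by
    rw [PowerSeries.coeff_derivative]
  rw [hdW, ← map_natCast (C : ℝ →+* ℝ⟦X⟧) (m + 1), map_neg, coeff_C_mul] at hc
  have hm1 : ((m : ℝ) + 1) ≠ 0 := by positivity
  have : coeff m (V ^ (m + 2) * d⁄dX ℝ U) = -(coeff (m + 1) (V ^ (m + 1))) := by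
    push_cast at hc
    have h2 : ((m : ℝ) + 1) * (coeff m (V ^ (m + 2) * d⁄dX ℝ U)
        + coeff (m + 1) (V ^ (m + 1))) = 0 := by linarith [hc]
    have h3 := (mul_eq_zero.mp h2).resolve_left hm1
    linarith [h3]
  rw [this]
  ring

lemma residue_one (hb0 : b 0 ≠ 0) :
    coeff 0 ((Useries b)⁻¹ * d⁄dX ℝ (Gseries b)) = 1 := by
  rw [coeff_zero_eq_constantCoeff_apply, map_mul, PowerSeries.constantCoeff_inv, constantCoeff_U]
  have : constantCoeff (d⁄dX ℝ (Gseries b)) = u b 0 := by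
    rw [← coeff_zero_eq_constantCoeff_apply, PowerSeries.coeff_derivative, zero_add,
      coeff_G_succ]
    push_cast; ring
  rw [this, u_zero]
  field_simp

lemma aeval_trunc_eq_sum (N : ℕ) (f : ℝ⟦X⟧) :
    Polynomial.aeval (Gseries b) (trunc N f)
      = ∑ m ∈ Finset.range N, coeff m f • (Gseries b ^ m) := by
  ext j
  rw [aeval_trunc, map_sum]
  exact Finset.sum_congr rfl fun m _ => by rw [map_smul, smul_eq_mul]

theorem main_identity (hb0 : b 0 ≠ 0) (n : ℕ) (hn : 1 ≤ n) :
    coeff n (Gseries b) * n = coeff (n - 1) ((PowerSeries.mk b) ^ n) := by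
  obtain ⟨N, rfl⟩ : ∃ N, n = N + 1 := ⟨n - 1, by omega⟩
  set U := Useries b with hU
  set V := U⁻¹ with hV
  set G := Gseries b with hG
  set F := PowerSeries.mk b with hF
  have hVU : V * U = 1 := PowerSeries.inv_mul_cancel U (by rw [hU, constantCoeff_U]; exact hb0)
  obtain ⟨W, hW⟩ := U_pow_congr b (N + 1) (N + 1)
  have hUn : U ^ (N + 1)
      = Polynomial.aeval G (trunc (N + 1) (F ^ (N + 1))) + X ^ (N + 1) * W := by
    rw [← hW]; ring
  have hone : V ^ (N + 1) * U ^ (N + 1) = 1 := by rw [← mul_pow, hVU, one_pow]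
  have hdG : d⁄dX ℝ G = V ^ (N + 1) * d⁄dX ℝ G * U ^ (N + 1) := by
    calc d⁄dX ℝ G = (V ^ (N + 1) * U ^ (N + 1)) * d⁄dX ℝ G := by rw [hone, one_mul]
      _ = V ^ (N + 1) * d⁄dX ℝ G * U ^ (N + 1) := by ring
  have key : coeff N (d⁄dX ℝ G) = coeff N (F ^ (N + 1)) := by
    conv_lhs => rw [hdG, hUn]
    rw [mul_add, map_add]
    have hz : coeff N (V ^ (N + 1) * d⁄dX ℝ G * (X ^ (N + 1) * W)) = 0 := by
      have : V ^ (N + 1) * d⁄dX ℝ G * (X ^ (N + 1) * W)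
          = X ^ (N + 1) * (V ^ (N + 1) * d⁄dX ℝ G * W) := by ring
      rw [this, coeff_X_pow_mul', if_neg (by omega)]
    rw [hz, add_zero, aeval_trunc_eq_sum, Finset.mul_sum]
    have hterm : ∀ k ∈ Finset.range (N + 1),
        coeff N (V ^ (N + 1) * d⁄dX ℝ G * (coeff k (F ^ (N + 1)) • G ^ k))
          = if k = N then coeff N (F ^ (N + 1)) else 0 := by
      intro k hk
      have hkN : k ≤ N := Nat.lt_succ_iff.mp (Finset.mem_range.mp hk)
      have hsm : V ^ (N + 1) * d⁄dX ℝ G * (coeff k (F ^ (N + 1)) • G ^ k)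
          = coeff k (F ^ (N + 1)) • (V ^ (N + 1) * d⁄dX ℝ G * G ^ k) := by
        rw [mul_smul_comm]
      rw [hsm, map_smul, smul_eq_mul]
      have hGk : G ^ k = X ^ k * U ^ k := by rw [hG, Gseries, mul_pow]
      have hVUk : V ^ k * U ^ k = 1 := by rw [← mul_pow, hVU, one_pow]
      rcases eq_or_ne k N with rfl | hne
      · have : V ^ (k + 1) * d⁄dX ℝ G * G ^ k = X ^ k * (V * d⁄dX ℝ G) := by
          rw [hGk]
          linear_combination (X ^ k * V * d⁄dX ℝ G) * hVUk
        rw [if_pos rfl, this, coeff_X_pow_mul', if_pos (le_refl k), Nat.sub_self,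
          residue_one b hb0, mul_one]
      · have hklt : k < N := lt_of_le_of_ne hkN hne
        have hsplit : V ^ (N + 1) = V ^ (N + 1 - k) * V ^ k := by
          rw [← pow_add]; congr 1; omega
        have : V ^ (N + 1) * d⁄dX ℝ G * G ^ k
            = X ^ k * (V ^ (N + 1 - k) * d⁄dX ℝ G) := by
          rw [hGk, hsplit]
          linear_combination (X ^ k * V ^ (N + 1 - k) * d⁄dX ℝ G) * hVUk
        rw [if_neg hne, this, coeff_X_pow_mul', if_pos hkN]
        obtain ⟨m, hm⟩ : ∃ m, N - k = m + 1 := ⟨N - k - 1, by omega⟩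
        have h2 : N + 1 - k = m + 2 := by omega
        rw [hm, h2, residue_zero b hb0 m, mul_zero]
    rw [map_sum, Finset.sum_congr rfl hterm, Finset.sum_ite_eq' (Finset.range (N + 1)) N]
    rw [if_pos (Finset.self_mem_range_succ N)]
  rw [PowerSeries.coeff_derivative] at key
  have : (N + 1 : ℕ) - 1 = N := by omega
  rw [this]
  push_cast
  convert key using 2

lemma coeff_G_eq_lagA (hb0 : b 0 ≠ 0) (n : ℕ) :
    coeff n (Gseries b) = lagA b n := by
  rcases Nat.eq_zero_or_pos n with rfl | hn
  · rw [coeff_G_zero, lagA, if_pos rfl]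
  · have hne : n ≠ 0 := Nat.pos_iff_ne_zero.mp hn
    rw [lagA]
    simp only [hne, if_false]
    have hcast : ((n : ℝ)) ≠ 0 := Nat.cast_ne_zero.mpr hne
    rw [← main_identity b hb0 n hn]
    field_simp

lemma mk_lagA (hb0 : b 0 ≠ 0) : PowerSeries.mk (lagA b) = Gseries b := by
  ext n
  rw [coeff_mk, coeff_G_eq_lagA b hb0]

theorem lagA_rec (hb0 : b 0 ≠ 0) (n : ℕ) (hn : 1 ≤ n) :
    lagA b n = ∑ m ∈ Finset.range n,
      b m * coeff (n - 1) ((PowerSeries.mk (lagA b)) ^ m) := by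
  obtain ⟨N, rfl⟩ : ∃ N, n = N + 1 := ⟨n - 1, by omega⟩
  rw [mk_lagA b hb0, ← coeff_G_eq_lagA b hb0, coeff_G_succ, u_eq]
  simp only [Nat.add_sub_cancel]
  refine Finset.sum_congr rfl fun m hm => ?_
  have hmN : m ≤ N := Nat.lt_succ_iff.mp (Finset.mem_range.mp hm)
  rw [coeff_G_pow, if_pos hmN]

lemma coeff_pow_nonneg {S : ℝ⟦X⟧} (h : ∀ i, 0 ≤ coeff i S) (m : ℕ) (j : ℕ) :
    0 ≤ coeff j (S ^ m) := by
  induction m generalizing j with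
  | zero => simp [coeff_one]; positivity
  | succ m ih =>
    rw [pow_succ, coeff_mul]
    exact Finset.sum_nonneg fun p _ => mul_nonneg (ih p.1) (h p.2)

lemma lagA_zero : lagA b 0 = 0 := by simp [lagA]

lemma lagA_nonneg (hnn : ∀ n, 0 ≤ b n) (n : ℕ) : 0 ≤ lagA b n := by
  rw [lagA]
  split_ifs
  · exact le_refl 0
  · exact mul_nonneg (by positivity) (coeff_pow_nonneg (by simp [hnn]) n (n - 1))

end Residue

section Analysis

variable (b : ℕ → ℝ)

/-- continuity of a nonneg power series on `[0, M]` given summability at `M` -/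
lemma contOn_powerSum (c : ℕ → ℝ) (hc : ∀ n, 0 ≤ c n) (M : ℝ) (hM : 0 ≤ M)
    (hsum : Summable fun n => c n * M ^ n) :
    ContinuousOn (fun x => ∑' n, c n * x ^ n) (Set.Icc 0 M) := by
  have hb : ∀ (n : ℕ) (x : ℝ), x ∈ Set.Icc 0 M → ‖c n * x ^ n‖ ≤ c n * M ^ n := by
    intro n x hx
    rw [Real.norm_eq_abs, abs_of_nonneg (mul_nonneg (hc n) (pow_nonneg hx.1 n))]
    exact mul_le_mul_of_nonneg_left (pow_le_pow_left₀ hx.1 hx.2 n) (hc n)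
  have := tendstoUniformlyOn_tsum hsum hb
  refine this.continuousOn (Filter.Frequently.of_forall fun N => ?_)
  exact continuousOn_finset_sum _ fun i _ => (continuousOn_const.mul ((continuousOn_id).pow i))

lemma psi_pos {t : ℝ} (hnn : ∀ n, 0 ≤ b n) (hb0 : 0 < b 0) (ht : 0 ≤ t)
    (hsum : Summable fun n => b n * t ^ n) : 0 < psi b t := by
  have h0 : b 0 ≤ psi b t := by
    have := hsum.le_tsum 0 (fun i _ => mul_nonneg (hnn i) (pow_nonneg ht i))
    simpa [psi] using this
  linarith

lemma psi_nonneg {t : ℝ} (hnn : ∀ n, 0 ≤ b n) (ht : 0 ≤ t) : 0 ≤ psi b t :=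
  tsum_nonneg fun n => mul_nonneg (hnn n) (pow_nonneg ht n)

lemma psi_zero : psi b 0 = b 0 := by
  rw [psi]
  rw [tsum_eq_single 0 (fun n hn => by simp [zero_pow hn])]
  simp

lemma psi_mono (hnn : ∀ n, 0 ≤ b n) {t1 t2 : ℝ} (h1 : 0 ≤ t1) (h12 : t1 ≤ t2)
    (hsum : Summable fun n => b n * t2 ^ n) : psi b t1 ≤ psi b t2 := by
  have hs1 : Summable fun n => b n * t1 ^ n := by
    refine Summable.of_nonneg_of_le (fun n => mul_nonneg (hnn n) (pow_nonneg h1 n))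
      (fun n => mul_le_mul_of_nonneg_left (pow_le_pow_left₀ h1 h12 n) (hnn n)) hsum
  exact Summable.tsum_le_tsum (fun n => mul_le_mul_of_nonneg_left (pow_le_pow_left₀ h1 h12 n) (hnn n))
    hs1 hsum

open PowerSeries in
lemma sum_coeff_pow_le (S : ℝ⟦X⟧) (hS : ∀ i, 0 ≤ coeff i S) {x : ℝ} (hx : 0 ≤ x)
    (N : ℕ) : ∀ m : ℕ, ∑ j ∈ Finset.range N, coeff j (S ^ m) * x ^ j
      ≤ (∑ j ∈ Finset.range N, coeff j S * x ^ j) ^ m := by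
  have hnonnegS : 0 ≤ ∑ j ∈ Finset.range N, coeff j S * x ^ j :=
    Finset.sum_nonneg fun j _ => mul_nonneg (hS j) (pow_nonneg hx j)
  intro m
  induction m with
  | zero =>
    simp only [pow_zero]
    calc ∑ j ∈ Finset.range N, coeff j (1 : ℝ⟦X⟧) * x ^ j
        = ∑ j ∈ Finset.range N, (if j = 0 then (1:ℝ) * x ^ j else 0) := by
          refine Finset.sum_congr rfl fun j _ => ?_
          rcases eq_or_ne j 0 with rfl | hj
          · simp
          · simp [coeff_one, hj]
      _ ≤ 1 := by
          rw [Finset.sum_ite_eq' (Finset.range N) 0 (fun j => (1:ℝ) * x ^ j)]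
          split_ifs <;> simp
  | succ m ih =>
    have hpowS : ∀ k j : ℕ, 0 ≤ coeff j (S ^ k) := fun k j => coeff_pow_nonneg hS k j
    have step1 : ∑ j ∈ Finset.range N, coeff j (S ^ (m + 1)) * x ^ j
        = ∑ j ∈ Finset.range N, ∑ p ∈ Finset.HasAntidiagonal.antidiagonal j,
            (coeff p.1 S * x ^ p.1) * (coeff p.2 (S ^ m) * x ^ p.2) := by
      refine Finset.sum_congr rfl fun j _ => ?_
      rw [pow_succ', coeff_mul, Finset.sum_mul]
      refine Finset.sum_congr rfl fun p hp => ?_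
      rw [Finset.HasAntidiagonal.mem_antidiagonal] at hp
      rw [← hp, pow_add]
      ring
    set f : ℕ × ℕ → ℝ := fun p => (coeff p.1 S * x ^ p.1) * (coeff p.2 (S ^ m) * x ^ p.2)
      with hf
    have hfnn : ∀ p : ℕ × ℕ, 0 ≤ f p := fun p =>
      mul_nonneg (mul_nonneg (hS p.1) (pow_nonneg hx p.1))
        (mul_nonneg (hpowS m p.2) (pow_nonneg hx p.2))
    have hdisj : (Finset.range N : Set ℕ).PairwiseDisjoint Finset.HasAntidiagonal.antidiagonal := by
      intro i _ j _ hij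
      simp only [Function.onFun]
      rw [Finset.disjoint_left]
      intro p hp1 hp2
      rw [Finset.HasAntidiagonal.mem_antidiagonal] at hp1 hp2
      exact hij (hp1.symm.trans hp2)
    have step2 : ∑ j ∈ Finset.range N, ∑ p ∈ Finset.HasAntidiagonal.antidiagonal j, f p
        = ∑ p ∈ (Finset.range N).biUnion Finset.HasAntidiagonal.antidiagonal, f p :=
      (Finset.sum_biUnion hdisj).symm
    have hsubset : (Finset.range N).biUnion Finset.HasAntidiagonal.antidiagonal
        ⊆ Finset.range N ×ˢ Finset.range N := by
      intro p hp
      rw [Finset.mem_biUnion] at hp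
      obtain ⟨j, hj, hpj⟩ := hp
      rw [Finset.HasAntidiagonal.mem_antidiagonal] at hpj
      rw [Finset.mem_range] at hj
      rw [Finset.mem_product, Finset.mem_range, Finset.mem_range]
      omega
    have step3 : ∑ p ∈ (Finset.range N).biUnion Finset.HasAntidiagonal.antidiagonal, f p
        ≤ ∑ p ∈ Finset.range N ×ˢ Finset.range N, f p :=
      Finset.sum_le_sum_of_subset_of_nonneg hsubset fun p _ _ => hfnn p
    have step4 : ∑ p ∈ Finset.range N ×ˢ Finset.range N, f p
        = (∑ j ∈ Finset.range N, coeff j S * x ^ j)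
          * (∑ j ∈ Finset.range N, coeff j (S ^ m) * x ^ j) := by
      rw [Finset.sum_product, Finset.sum_mul]
      refine Finset.sum_congr rfl fun i _ => ?_
      rw [Finset.mul_sum]
    calc ∑ j ∈ Finset.range N, coeff j (S ^ (m + 1)) * x ^ j
        = ∑ p ∈ (Finset.range N).biUnion Finset.HasAntidiagonal.antidiagonal, f p := by rw [step1, step2]
      _ ≤ _ := step3
      _ = _ := step4
      _ ≤ (∑ j ∈ Finset.range N, coeff j S * x ^ j) ^ (m + 1) := by
          rw [pow_succ']
          refine mul_le_mul_of_nonneg_left ?_ hnonnegS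
          exact ih

open PowerSeries in
theorem partial_le (hnn : ∀ n, 0 ≤ b n) (hb0 : 0 < b 0)
    {s x : ℝ} (hs0 : 0 ≤ s)
    (hsum : Summable fun n => b n * s ^ n)
    (hx : 0 ≤ x) (hxs : x * psi b s ≤ s) :
    ∀ N, ∑ n ∈ Finset.range N, lagA b n * x ^ n ≤ s := by
  have hb0' : b 0 ≠ 0 := ne_of_gt hb0
  have hAnn : ∀ n, 0 ≤ lagA b n := lagA_nonneg b hnn
  have hGnn : ∀ i, 0 ≤ coeff i (PowerSeries.mk (lagA b)) := by
    intro i; rw [coeff_mk]; exact hAnn i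
  intro N
  induction N with
  | zero => simpa using hs0
  | succ N ih =>
    rw [Finset.sum_range_succ' (fun n => lagA b n * x ^ n) N]
    rw [lagA_zero]
    simp only [mul_zero, zero_mul, pow_zero, mul_one, add_zero]
    have hrec : ∀ j : ℕ, lagA b (j + 1) * x ^ (j + 1)
        = x * (x ^ j * ∑ m ∈ Finset.range (j + 1),
            b m * coeff j ((PowerSeries.mk (lagA b)) ^ m)) := by
      intro j
      rw [lagA_rec b hb0' (j + 1) (by omega)]
      simp only [Nat.add_sub_cancel]
      ring
    calc ∑ j ∈ Finset.range N, lagA b (j + 1) * x ^ (j + 1)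
        = x * ∑ j ∈ Finset.range N, x ^ j * ∑ m ∈ Finset.range (j + 1),
            b m * coeff j ((PowerSeries.mk (lagA b)) ^ m) := by
          rw [Finset.mul_sum]
          exact Finset.sum_congr rfl fun j _ => hrec j
      _ ≤ x * ∑ j ∈ Finset.range N, x ^ j * ∑ m ∈ Finset.range N,
            b m * coeff j ((PowerSeries.mk (lagA b)) ^ m) := by
          refine mul_le_mul_of_nonneg_left (Finset.sum_le_sum fun j hj => ?_) hx
          refine mul_le_mul_of_nonneg_left ?_ (pow_nonneg hx j)
          refine Finset.sum_le_sum_of_subset_of_nonneg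
            (Finset.range_subset_range.mpr (by rw [Finset.mem_range] at hj; omega)) ?_
          intro m _ _
          exact mul_nonneg (hnn m) (coeff_pow_nonneg hGnn m j)
      _ = ∑ m ∈ Finset.range N, b m * (x * ∑ j ∈ Finset.range N,
            coeff j ((PowerSeries.mk (lagA b)) ^ m) * x ^ j) := by
          have e1 : ∀ i ∈ Finset.range N,
              x * (x ^ i * ∑ m ∈ Finset.range N,
                b m * coeff i ((PowerSeries.mk (lagA b)) ^ m))
              = ∑ m ∈ Finset.range N,
                b m * (x * (coeff i ((PowerSeries.mk (lagA b)) ^ m) * x ^ i)) := by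
            intro i _
            rw [Finset.mul_sum, Finset.mul_sum]
            exact Finset.sum_congr rfl fun m _ => by ring
          rw [Finset.mul_sum, Finset.sum_congr rfl e1, Finset.sum_comm]
          refine Finset.sum_congr rfl fun m _ => ?_
          rw [Finset.mul_sum, Finset.mul_sum]
      _ ≤ ∑ m ∈ Finset.range N, b m * (x * s ^ m) := by
          refine Finset.sum_le_sum fun m _ => ?_
          refine mul_le_mul_of_nonneg_left (mul_le_mul_of_nonneg_left ?_ hx) (hnn m)
          calc ∑ j ∈ Finset.range N, coeff j ((PowerSeries.mk (lagA b)) ^ m) * x ^ j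
              ≤ (∑ j ∈ Finset.range N, coeff j (PowerSeries.mk (lagA b)) * x ^ j) ^ m :=
                sum_coeff_pow_le _ hGnn hx N m
            _ ≤ s ^ m := by
                refine pow_le_pow_left₀ (Finset.sum_nonneg fun j _ =>
                  mul_nonneg (hGnn j) (pow_nonneg hx j)) ?_ m
                calc ∑ j ∈ Finset.range N, coeff j (PowerSeries.mk (lagA b)) * x ^ j
                    = ∑ j ∈ Finset.range N, lagA b j * x ^ j := by
                      exact Finset.sum_congr rfl fun j _ => by rw [coeff_mk]
                  _ ≤ s := ih
      _ = x * ∑ m ∈ Finset.range N, b m * s ^ m := by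
          rw [Finset.mul_sum]; exact Finset.sum_congr rfl fun m _ => by ring
      _ ≤ x * psi b s := by
          refine mul_le_mul_of_nonneg_left ?_ hx
          exact Summable.sum_le_tsum (Finset.range N)
            (fun n _ => mul_nonneg (hnn n) (pow_nonneg hs0 n)) hsum
      _ ≤ s := hxs

lemma psi_ge_b0 {t : ℝ} (hnn : ∀ n, 0 ≤ b n) (ht : 0 ≤ t)
    (hsum : Summable fun n => b n * t ^ n) : b 0 ≤ psi b t := by
  have := hsum.le_tsum 0 (fun i _ => mul_nonneg (hnn i) (pow_nonneg ht i))
  simpa [psi] using this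

lemma lagA_summable (hnn : ∀ n, 0 ≤ b n) (hb0 : 0 < b 0)
    {s x : ℝ} (hs0 : 0 ≤ s) (hsum : Summable fun n => b n * s ^ n)
    (hx : 0 ≤ x) (hxs : x * psi b s ≤ s) :
    Summable fun n => lagA b n * x ^ n :=
  summable_of_sum_range_le
    (fun n => mul_nonneg (lagA_nonneg b hnn n) (pow_nonneg hx n))
    (partial_le b hnn hb0 hs0 hsum hx hxs)

lemma lagG_le (hnn : ∀ n, 0 ≤ b n) (hb0 : 0 < b 0)
    {s x : ℝ} (hs0 : 0 ≤ s) (hsum : Summable fun n => b n * s ^ n)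
    (hx : 0 ≤ x) (hxs : x * psi b s ≤ s) :
    lagG b x ≤ s :=
  Real.tsum_le_of_sum_range_le
    (fun n => mul_nonneg (lagA_nonneg b hnn n) (pow_nonneg hx n))
    (partial_le b hnn hb0 hs0 hsum hx hxs)

lemma lagG_contOn (hnn : ∀ n, 0 ≤ b n) (hb0 : 0 < b 0)
    {s : ℝ} (hs0 : 0 ≤ s) (hsum : Summable fun n => b n * s ^ n) :
    ContinuousOn (lagG b) (Set.Icc 0 (s / psi b s)) := by
  have hψ : 0 < psi b s := psi_pos b hnn hb0 hs0 hsum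
  have hx0 : 0 ≤ s / psi b s := div_nonneg hs0 (le_of_lt hψ)
  have hxs : (s / psi b s) * psi b s ≤ s := by
    rw [div_mul_cancel₀ _ (ne_of_gt hψ)]
  exact contOn_powerSum (lagA b) (lagA_nonneg b hnn) _ hx0
    (lagA_summable b hnn hb0 hs0 hsum hx0 hxs)

lemma lagA_one : lagA b 1 = b 0 := by
  simp [lagA, pow_one]

/-- the limit of `lagG b (t/ψ(t))/t` as `t → 0⁺` is `1`. -/
theorem tendsto_q_zero (hnn : ∀ n, 0 ≤ b n) (hb0 : 0 < b 0) (R : ℝ) (hR : 0 < R)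
    (hconv : ∀ t : ℝ, 0 ≤ t → t < R → Summable fun n => b n * t ^ n) :
    Filter.Tendsto (fun t => lagG b (t / psi b t) / t)
      (nhdsWithin 0 (Set.Ioi 0)) (nhds 1) := by
  set s : ℝ := R / 2 with hs
  have hs0 : 0 < s := by positivity
  have hsR : s < R := by rw [hs]; linarith
  have hsum : Summable fun n => b n * s ^ n := hconv s (le_of_lt hs0) hsR
  have hψs : 0 < psi b s := psi_pos b hnn hb0 (le_of_lt hs0) hsum
  set x1 : ℝ := s / psi b s with hx1
  have hx10 : 0 < x1 := div_pos hs0 hψs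
  have hx1s : x1 * psi b s ≤ s := by rw [hx1, div_mul_cancel₀ _ (ne_of_gt hψs)]
  have hAsum : Summable fun n => lagA b n * x1 ^ n :=
    lagA_summable b hnn hb0 (le_of_lt hs0) hsum (le_of_lt hx10) hx1s
  have hAle : (∑' n, lagA b n * x1 ^ n) ≤ s :=
    Real.tsum_le_of_sum_range_le
      (fun n => mul_nonneg (lagA_nonneg b hnn n) (pow_nonneg (le_of_lt hx10) n))
      (partial_le b hnn hb0 (le_of_lt hs0) hsum (le_of_lt hx10) hx1s)
  -- tail bound:  for 0 ≤ x ≤ x1,  ∑' n, lagA (n+2) x^(n+2) ≤ (x/x1)^2 * s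
  have tail_bound : ∀ x : ℝ, 0 ≤ x → x ≤ x1 →
      (∑' n, lagA b (n + 2) * x ^ (n + 2)) ≤ (x / x1) ^ 2 * s := by
    intro x hx0 hxx1
    have hr : (x / x1) ≤ 1 := by
      rw [div_le_one hx10]; exact hxx1
    have hr0 : 0 ≤ x / x1 := div_nonneg hx0 (le_of_lt hx10)
    have hterm : ∀ n : ℕ, lagA b (n + 2) * x ^ (n + 2)
        ≤ (x / x1) ^ 2 * (lagA b (n + 2) * x1 ^ (n + 2)) := by
      intro n
      have hxeq : x ^ (n + 2) = (x / x1) ^ (n + 2) * x1 ^ (n + 2) := by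
        rw [← mul_pow, div_mul_cancel₀ _ (ne_of_gt hx10)]
      rw [hxeq]
      have h1 : (x / x1) ^ (n + 2) ≤ (x / x1) ^ 2 :=
        pow_le_pow_of_le_one hr0 hr (by omega)
      calc lagA b (n + 2) * ((x / x1) ^ (n + 2) * x1 ^ (n + 2))
          ≤ lagA b (n + 2) * ((x / x1) ^ 2 * x1 ^ (n + 2)) := by
            refine mul_le_mul_of_nonneg_left ?_ (lagA_nonneg b hnn _)
            exact mul_le_mul_of_nonneg_right h1 (pow_nonneg (le_of_lt hx10) _)
        _ = (x / x1) ^ 2 * (lagA b (n + 2) * x1 ^ (n + 2)) := by ring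
    have hAsum2 : Summable fun n => lagA b (n + 2) * x1 ^ (n + 2) :=
      (summable_nat_add_iff (f := fun n => lagA b n * x1 ^ n) 2).mpr hAsum
    have hxsum2 : Summable fun n => lagA b (n + 2) * x ^ (n + 2) := by
      refine Summable.of_nonneg_of_le
        (fun n => mul_nonneg (lagA_nonneg b hnn _) (pow_nonneg hx0 _))
        hterm (hAsum2.mul_left _)
    calc (∑' n, lagA b (n + 2) * x ^ (n + 2))
        ≤ ∑' n, (x / x1) ^ 2 * (lagA b (n + 2) * x1 ^ (n + 2)) :=
          Summable.tsum_le_tsum hterm hxsum2 (hAsum2.mul_left _)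
      _ = (x / x1) ^ 2 * ∑' n, lagA b (n + 2) * x1 ^ (n + 2) := tsum_mul_left
      _ ≤ (x / x1) ^ 2 * s := by
          refine mul_le_mul_of_nonneg_left ?_ (by positivity)
          calc (∑' n, lagA b (n + 2) * x1 ^ (n + 2))
              ≤ ∑' n, lagA b n * x1 ^ n := by
                have := (hAsum.sum_add_tsum_nat_add 2).symm
                have hnn2 : 0 ≤ ∑ i ∈ Finset.range 2, lagA b i * x1 ^ i :=
                  Finset.sum_nonneg fun i _ =>
                    mul_nonneg (lagA_nonneg b hnn i) (pow_nonneg (le_of_lt hx10) i)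
                linarith [this]
            _ ≤ s := hAle
  have hA1 : lagA b 1 = b 0 := lagA_one b
  have hdecomp : ∀ x : ℝ, 0 ≤ x → x ≤ x1 →
      lagG b x = b 0 * x + ∑' n, lagA b (n + 2) * x ^ (n + 2) := by
    intro x hx0 hxx1
    have hxψ : x * psi b s ≤ s := by
      calc x * psi b s ≤ x1 * psi b s := mul_le_mul_of_nonneg_right hxx1 (le_of_lt hψs)
        _ ≤ s := hx1s
    have hxsumf : Summable fun n => lagA b n * x ^ n :=
      lagA_summable b hnn hb0 (le_of_lt hs0) hsum hx0 hxψ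
    rw [lagG, ← hxsumf.sum_add_tsum_nat_add 2, Finset.sum_range_succ, Finset.sum_range_one,
      lagA_zero, hA1]
    ring_nf
  set C : ℝ := s / (x1 ^ 2 * b 0 ^ 2) with hC
  have hC0 : 0 ≤ C := by positivity
  set δ : ℝ := min s (x1 * b 0) with hδ
  have hδ0 : 0 < δ := lt_min hs0 (by positivity)
  have hmem : Set.Ioo (0:ℝ) δ ∈ nhdsWithin (0:ℝ) (Set.Ioi 0) :=
    Ioo_mem_nhdsGT_of_mem ⟨le_refl 0, hδ0⟩
  have hbound : ∀ t ∈ Set.Ioo (0:ℝ) δ,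
      b 0 / psi b t ≤ lagG b (t / psi b t) / t ∧
      lagG b (t / psi b t) / t ≤ b 0 / psi b t + C * t := by
    intro t ht
    obtain ⟨ht0, htδ⟩ := ht
    have htR : t < R := by
      have : δ ≤ s := min_le_left _ _
      linarith
    have hsumt : Summable fun n => b n * t ^ n := hconv t (le_of_lt ht0) htR
    have hψt : 0 < psi b t := psi_pos b hnn hb0 (le_of_lt ht0) hsumt
    have hψtb : b 0 ≤ psi b t := psi_ge_b0 b hnn (le_of_lt ht0) hsumt
    set φt : ℝ := t / psi b t with hφt
    have hφ0 : 0 ≤ φt := div_nonneg (le_of_lt ht0) (le_of_lt hψt)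
    have hφb : φt ≤ t / b 0 := by
      rw [hφt]
      gcongr
    have hφx1 : φt ≤ x1 := by
      have h1 : t / b 0 < x1 := by
        rw [div_lt_iff₀ hb0]
        have : δ ≤ x1 * b 0 := min_le_right _ _
        linarith
      linarith
    have hrnn : 0 ≤ ∑' n, lagA b (n + 2) * φt ^ (n + 2) :=
      tsum_nonneg fun n => mul_nonneg (lagA_nonneg b hnn _) (pow_nonneg hφ0 _)
    have hq : lagG b φt / t = b 0 / psi b t + (∑' n, lagA b (n + 2) * φt ^ (n + 2)) / t := by
      rw [hdecomp φt hφ0 hφx1, add_div]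
      congr 1
      rw [hφt]
      field_simp
    constructor
    · rw [hq]
      have : 0 ≤ (∑' n, lagA b (n + 2) * φt ^ (n + 2)) / t := div_nonneg hrnn (le_of_lt ht0)
      linarith
    · rw [hq]
      have htail : (∑' n, lagA b (n + 2) * φt ^ (n + 2)) ≤ (φt / x1) ^ 2 * s :=
        tail_bound φt hφ0 hφx1
      have h2 : (φt / x1) ^ 2 * s ≤ (t / (b 0 * x1)) ^ 2 * s := by
        refine mul_le_mul_of_nonneg_right ?_ (le_of_lt hs0)
        refine pow_le_pow_left₀ (by positivity) ?_ 2
        rw [div_le_div_iff₀ hx10 (by positivity)]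
        calc φt * (b 0 * x1) ≤ (t / b 0) * (b 0 * x1) := by
              exact mul_le_mul_of_nonneg_right hφb (by positivity)
          _ = t * x1 := by field_simp
      have h3 : (∑' n, lagA b (n + 2) * φt ^ (n + 2)) / t ≤ C * t := by
        rw [div_le_iff₀ ht0]
        calc (∑' n, lagA b (n + 2) * φt ^ (n + 2)) ≤ (t / (b 0 * x1)) ^ 2 * s :=
              le_trans htail h2
          _ = C * t * t := by
              rw [hC]
              field_simp
      linarith
  have hψ0 : Filter.Tendsto (psi b) (nhdsWithin 0 (Set.Ioi 0)) (nhds (b 0)) := by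
    have hcont : ContinuousOn (psi b) (Set.Icc 0 s) :=
      contOn_powerSum b hnn s (le_of_lt hs0) hsum
    have h0mem : (0:ℝ) ∈ Set.Icc (0:ℝ) s := ⟨le_refl 0, le_of_lt hs0⟩
    have h1 := (hcont 0 h0mem)
    rw [ContinuousWithinAt, psi_zero] at h1
    have h2 : nhdsWithin (0:ℝ) (Set.Ioi 0) = nhdsWithin (0:ℝ) (Set.Ioo 0 s) :=
      (nhdsWithin_Ioo_eq_nhdsGT hs0).symm
    rw [h2]
    exact h1.mono_left (nhdsWithin_mono 0 Set.Ioo_subset_Icc_self)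
  have hlb : Filter.Tendsto (fun t => b 0 / psi b t) (nhdsWithin 0 (Set.Ioi 0)) (nhds 1) := by
    have := (tendsto_const_nhds (α := ℝ) (x := b 0)).div hψ0 (ne_of_gt hb0)
    simpa [div_self (ne_of_gt hb0), Pi.div_def] using this
  have hub : Filter.Tendsto (fun t => b 0 / psi b t + C * t)
      (nhdsWithin 0 (Set.Ioi 0)) (nhds 1) := by
    have h1 : Filter.Tendsto (fun t : ℝ => C * t) (nhdsWithin 0 (Set.Ioi 0)) (nhds 0) := by
      have hcm : Continuous (fun t : ℝ => C * t) := continuous_const.mul continuous_id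
      have := (hcm.tendsto (0:ℝ)).mono_left (nhdsWithin_le_nhds (s := Set.Ioi (0:ℝ)))
      simpa using this
    have := hlb.add h1
    simpa using this
  refine tendsto_of_tendsto_of_tendsto_of_le_of_le' hlb hub ?_ ?_
  · exact Filter.eventually_of_mem hmem fun t ht => (hbound t ht).1
  · exact Filter.eventually_of_mem hmem fun t ht => (hbound t ht).2

end Analysis

end Stmt15

theorem stmt_15
    (b : ℕ → ℝ) (R : ℝ) (hR : 0 < R)
    (hnn : ∀ n, 0 ≤ b n) (hb0 : 0 < b 0)
    (hnc : ∃ n, 1 ≤ n ∧ b n ≠ 0)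
    (hconv : ∀ t : ℝ, 0 ≤ t → t < R → Summable fun n => b n * t ^ n) :
    ContinuousOn (fun t => if t = 0 then 1 else lagG b (t / psi b t) / t)
      (Set.Ico 0 R) ∧
    Filter.Tendsto (fun t => lagG b (t / psi b t) / t)
      (nhdsWithin 0 (Set.Ioi 0)) (nhds 1) := by
  have hq0 := Stmt15.tendsto_q_zero b hnn hb0 R hR hconv
  set q : ℝ → ℝ := fun t => if t = 0 then 1 else lagG b (t / psi b t) / t with hq
  refine ⟨?_, hq0⟩
  intro t0 ht0mem
  obtain ⟨ht00, ht0R⟩ := ht0mem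
  rcases eq_or_ne t0 0 with rfl | ht0ne
  · -- continuity at 0
    have hval : q 0 = 1 := by rw [hq]; simp
    rw [ContinuousWithinAt, hval]
    have hsub : Set.Ico (0:ℝ) R ⊆ {0} ∪ Set.Ioi 0 := by
      intro x hx
      rcases eq_or_lt_of_le hx.1 with h | h
      · exact Or.inl (by simp [← h])
      · exact Or.inr h
    refine Filter.Tendsto.mono_left ?_ (nhdsWithin_mono 0 hsub)
    rw [nhdsWithin_union]
    rw [Filter.tendsto_sup]
    constructor
    · rw [nhdsWithin_singleton]
      have := tendsto_pure_nhds q 0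
      rwa [hval] at this
    · refine Filter.Tendsto.congr' ?_ hq0
      filter_upwards [self_mem_nhdsWithin] with t ht
      rw [hq]
      exact (if_neg (ne_of_gt ht)).symm
  · -- continuity at t0 > 0
    have ht0pos : 0 < t0 := lt_of_le_of_ne ht00 (Ne.symm ht0ne)
    set s₂ : ℝ := (t0 + R) / 2 with hs₂
    have ht0s₂ : t0 < s₂ := by rw [hs₂]; linarith
    have hs₂R : s₂ < R := by rw [hs₂]; linarith
    have hs₂0 : (0:ℝ) ≤ s₂ := by linarith
    have hsum₂ : Summable fun n => b n * s₂ ^ n := hconv s₂ hs₂0 hs₂R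
    have hψc : ContinuousOn (psi b) (Set.Icc 0 s₂) :=
      Stmt15.contOn_powerSum b hnn s₂ hs₂0 hsum₂
    have hψpos : ∀ x ∈ Set.Icc (0:ℝ) s₂, 0 < psi b x := fun x hx =>
      Stmt15.psi_pos b hnn hb0 hx.1 (hconv x hx.1 (lt_of_le_of_lt hx.2 hs₂R))
    have hφc : ContinuousOn (fun t => t / psi b t) (Set.Icc 0 s₂) :=
      (continuous_id.continuousOn).div hψc fun x hx => ne_of_gt (hψpos x hx)
    obtain ⟨sm, hsm_mem, hsm_max⟩ :=
      isCompact_Icc.exists_isMaxOn (Set.nonempty_Icc.mpr hs₂0) hφc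
    set x0 : ℝ := sm / psi b sm with hx0
    have hsmR : sm < R := lt_of_le_of_lt hsm_mem.2 hs₂R
    have hsum_m : Summable fun n => b n * sm ^ n := hconv sm hsm_mem.1 hsmR
    have hGc : ContinuousOn (lagG b) (Set.Icc 0 x0) :=
      Stmt15.lagG_contOn b hnn hb0 hsm_mem.1 hsum_m
    have hmaps : Set.MapsTo (fun t => t / psi b t) (Set.Icc 0 s₂) (Set.Icc 0 x0) := by
      intro x hx
      exact ⟨div_nonneg hx.1 (le_of_lt (hψpos x hx)), hsm_max hx⟩
    have hcomp : ContinuousOn (fun t => lagG b (t / psi b t)) (Set.Icc 0 s₂) :=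
      hGc.comp hφc hmaps
    have h1 : ContinuousWithinAt (fun t => lagG b (t / psi b t)) (Set.Icc 0 s₂) t0 :=
      hcomp t0 ⟨ht00, le_of_lt ht0s₂⟩
    have h2 : ContinuousWithinAt (fun t => lagG b (t / psi b t) / t) (Set.Icc 0 s₂) t0 :=
      h1.div continuousWithinAt_id (ne_of_gt ht0pos)
    have hmemf : Set.Icc (0:ℝ) s₂ ∈ nhdsWithin t0 (Set.Ico 0 R) := by
      refine Filter.mem_of_superset
        (inter_mem_nhdsWithin (Set.Ico 0 R) (Iio_mem_nhds ht0s₂)) ?_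
      intro x hx
      exact ⟨hx.1.1, le_of_lt hx.2⟩
    have h3 : ContinuousWithinAt (fun t => lagG b (t / psi b t) / t) (Set.Ico 0 R) t0 :=
      h2.mono_of_mem_nhdsWithin hmemf
    refine h3.congr_of_eventuallyEq ?_ (if_neg ht0ne)
    have hne : {t : ℝ | t ≠ 0} ∈ nhds t0 := isOpen_compl_singleton.mem_nhds ht0ne
    filter_upwards [mem_nhdsWithin_of_mem_nhds hne] with t ht
    exact if_neg ht
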